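/- For the exponent set λⱼ = 2j − 1 + 1/(2(2j−1)), j = 1, 2, …, the sequences aⱼ = 1 and bⱼ = −1 are not Bohr-equivalent: there is no single ℚ-linear map ψ : span_ℚ(Λ) → ℝ with e^{iψ(λⱼ)} = −1 for all j. -/
import Mathlib


noncomputable section

/-- Bohr equivalence of coefficient sequences: a single `ℚ`-linear map `ψ` on the `ℚ`-span of
all the exponents with `b j = a j * exp (i ψ (lam j))` for every `j`. -/
def BohrEquivSeq (lam : ℕ → ℝ) (a b : ℕ → ℂ) : Prop :=
  ∃ ψ : (Submodule.span ℚ (Set.range lam)) →ₗ[ℚ] ℝ,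
    ∀ j : ℕ, b j = a j * Complex.exp
      (Complex.I * (ψ ⟨lam j, Submodule.subset_span (Set.mem_range_self j)⟩))

/-- The exponents `λⱼ = 2j − 1 + 1/(2(2j−1))`, `j = 1, 2, …` (here indexed by `ℕ` starting
from `0`, so `lam j` is the `(j+1)`-st exponent). -/
def lamEx (j : ℕ) : ℝ := (2 * (j : ℝ) + 1) + 1 / (2 * (2 * (j : ℝ) + 1))

lemma exists_odd_of_exp (θ : ℝ) (h : Complex.exp (Complex.I * θ) = -1) :
    ∃ m : ℤ, Odd m ∧ θ = m * Real.pi := by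
  have h1 : Complex.exp (Complex.I * θ + Real.pi * Complex.I) = 1 := by
    rw [Complex.exp_add, h, Complex.exp_pi_mul_I]; ring
  obtain ⟨n, hn⟩ := Complex.exp_eq_one_iff.mp h1
  refine ⟨2 * n - 1, ⟨n - 1, by ring⟩, ?_⟩
  have him := congrArg Complex.im hn
  simp [Complex.mul_im, Complex.add_im] at him
  push_cast
  linarith [him]


/-- For the exponents `λⱼ = 2j − 1 + 1/(2(2j−1))`, the constant sequences `aⱼ = 1` and
`bⱼ = −1` are *not* Bohr-equivalent. -/
theorem not_bohrEquiv_one_negOne :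
    ¬ BohrEquivSeq lamEx (fun _ => (1 : ℂ)) (fun _ => (-1 : ℂ)) := by
  rintro ⟨ψ, hψ⟩
  have key : ∀ j : ℕ, ∃ m : ℤ, Odd m ∧
      (ψ ⟨lamEx j, Submodule.subset_span (Set.mem_range_self j)⟩ : ℝ) = m * Real.pi := by
    intro j
    apply exists_odd_of_exp
    have := (hψ j).symm
    simpa using this
  obtain ⟨m0, hm0odd, hm0⟩ := key 0
  set j : ℕ := m0.natAbs with hj
  obtain ⟨m, hmodd, hm⟩ := key j
  have hne : (2 * ((j:ℝ)) + 1) ≠ 0 := by positivity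
  have hx : ((3*(2*(j:ℚ)+1)) : ℚ) •
      (⟨lamEx j, Submodule.subset_span (Set.mem_range_self j)⟩ :
        Submodule.span ℚ (Set.range lamEx)) =
      ((2*(2*(j:ℚ)+1)^2+1) : ℚ) •
      (⟨lamEx 0, Submodule.subset_span (Set.mem_range_self 0)⟩ :
        Submodule.span ℚ (Set.range lamEx)) := by
    apply Subtype.ext
    show ((3*(2*(j:ℚ)+1)) : ℚ) • lamEx j = ((2*(2*(j:ℚ)+1)^2+1) : ℚ) • lamEx 0
    rw [Rat.smul_def, Rat.smul_def]
    push_cast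
    simp only [lamEx]
    push_cast
    field_simp
    ring
  have hψx := congrArg ψ hx
  rw [map_smul, map_smul] at hψx
  rw [Rat.smul_def, Rat.smul_def, hm, hm0] at hψx
  push_cast at hψx
  have hint : (3*(2*(j:ℤ)+1)*m : ℤ) = (2*(2*(j:ℤ)+1)^2+1)*m0 := by
    have hπ : (Real.pi : ℝ) ≠ 0 := Real.pi_ne_zero
    have h2 : ((3*(2*(j:ℤ)+1)*m : ℤ) : ℝ) * Real.pi = ((2*(2*(j:ℤ)+1)^2+1)*m0 : ℤ) * Real.pi := by
      push_cast; linarith [hψx]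
    exact_mod_cast mul_right_cancel₀ hπ h2
  have hdvd : (2*(j:ℤ)+1) ∣ m0 := ⟨3*m - 2*(2*(j:ℤ)+1)*m0, by linear_combination -hint⟩
  have hm0ne : m0 ≠ 0 := by rcases hm0odd with ⟨k, hk⟩; omega
  have hle := Int.le_of_dvd (abs_pos.mpr hm0ne) ((dvd_abs _ _).mpr hdvd)
  rw [Int.abs_eq_natAbs] at hle
  omega
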